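/- Let n ≥ 2 be an integer, let Ω ⊆ ℝⁿ be measurable, let F, G : Ω → [0,∞) be measurable functions, let C₁ > 0 and a_∞ > 1, and suppose that for every ε ∈ (0,1) there exists a_ε ∈ (0,1) such that for all λ > 0, L^n({ζ ∈ Ω : F(ζ) > a_∞ λ}) ≤ C₁ ε L^n({ζ ∈ Ω : F(ζ) > λ}) + L^n({ζ ∈ Ω : G(ζ) > a_ε λ}). Then for every 0 < q < ∞ and 0 < s < ∞ with ‖F‖_{L^{q,s}(Ω)} < ∞, there exist ε ∈ (0,1) depending only on C₁, a_∞, q, s, and a constant C₂ > 0 depending only on C₁, a_∞, q, s and the corresponding value a_ε, such that ‖F‖_{L^{q,s}(Ω)} ≤ C₂ ‖G‖_{L^{q,s}(Ω)}. (This is the derivation of Theorem 1.4 from the good-λ inequality of Theorem 1.3.) -/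

import Mathlib

open MeasureTheory ENNReal

/-- The Lorentz quasinorm
`‖h‖_{L^{q,s}(Ω)} = (q ∫_0^∞ τ^s L^n({ζ ∈ Ω : |h(ζ)| > τ})^{s/q} dτ/τ)^{1/s}`,
valued in `ℝ≥0∞`. -/
noncomputable def lorentzNorm {n : ℕ} (Ω : Set (EuclideanSpace ℝ (Fin n))) (q s : ℝ)
    (h : EuclideanSpace ℝ (Fin n) → ℝ) : ℝ≥0∞ :=
  (ENNReal.ofReal q *
      ∫⁻ τ in Set.Ioi (0 : ℝ),
        ENNReal.ofReal (τ ^ (s - 1)) * volume {ζ ∈ Ω | τ < |h ζ|} ^ (s / q)) ^ (1 / s)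

/-- The Marcinkiewicz (weak Lebesgue) quasinorm
`‖h‖_{L^{q,∞}(Ω)} = sup_{τ>0} τ L^n({ζ ∈ Ω : |h(ζ)| > τ})^{1/q}`, valued in `ℝ≥0∞`. -/
noncomputable def weakLorentzNorm {n : ℕ} (Ω : Set (EuclideanSpace ℝ (Fin n))) (q : ℝ)
    (h : EuclideanSpace ℝ (Fin n) → ℝ) : ℝ≥0∞ :=
  ⨆ (τ : ℝ) (_ : 0 < τ), ENNReal.ofReal τ * volume {ζ ∈ Ω | τ < |h ζ|} ^ (1 / q)

/-- Substitution `x ↦ c x` in a lower integral over `(0,∞)`; no measurability needed. -/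
lemma scale_lintegral (g : ℝ → ℝ≥0∞) {c : ℝ} (hc : 0 < c) :
    ∫⁻ x in Set.Ioi (0 : ℝ), g (c * x) =
      ENNReal.ofReal c⁻¹ * ∫⁻ x in Set.Ioi (0 : ℝ), g x := by
  let e : ℝ ≃ᵐ ℝ := (Homeomorph.mulLeft₀ c hc.ne').toMeasurableEquiv
  have he : ⇑e = (c * ·) := rfl
  have hpre : e ⁻¹' Set.Ioi (0 : ℝ) = Set.Ioi 0 := by
    ext x
    simp [he, mul_pos_iff_of_pos_left hc]
  have h2 := MeasurableEquiv.restrict_map e volume (Set.Ioi 0)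
  rw [hpre] at h2
  have h1 : (volume.restrict (Set.Ioi (0:ℝ))).map e
      = ENNReal.ofReal c⁻¹ • volume.restrict (Set.Ioi (0:ℝ)) := by
    rw [← h2, he, Real.map_volume_mul_left hc.ne', abs_of_pos (inv_pos.2 hc),
      Measure.restrict_smul]
  calc ∫⁻ x in Set.Ioi (0:ℝ), g (c * x)
      = ∫⁻ x, g (e x) ∂(volume.restrict (Set.Ioi (0:ℝ))) := by rw [he]
    _ = ∫⁻ y, g y ∂((volume.restrict (Set.Ioi (0:ℝ))).map e) :=
        (MeasureTheory.lintegral_map_equiv g e).symm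
    _ = ENNReal.ofReal c⁻¹ * ∫⁻ x in Set.Ioi (0:ℝ), g x := by
        rw [h1, lintegral_smul_measure, smul_eq_mul]

/-- Weighted substitution `x ↦ c x` against the weight `x ^ (s-1)`. -/
lemma scale_weighted (N : ℝ → ℝ≥0∞) {s c : ℝ} (hc : 0 < c) :
    ∫⁻ x in Set.Ioi (0 : ℝ), ENNReal.ofReal (x ^ (s - 1)) * N (c * x) =
      ENNReal.ofReal (c ^ (-s)) *
        ∫⁻ x in Set.Ioi (0 : ℝ), ENNReal.ofReal (x ^ (s - 1)) * N x := by
  have h0 := scale_lintegral (fun x => ENNReal.ofReal (x ^ (s - 1)) * N x) hc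
  have hcongr : ∫⁻ x in Set.Ioi (0:ℝ), ENNReal.ofReal ((c * x) ^ (s - 1)) * N (c * x)
      = ∫⁻ x in Set.Ioi (0:ℝ),
          ENNReal.ofReal (c ^ (s - 1)) * (ENNReal.ofReal (x ^ (s - 1)) * N (c * x)) := by
    refine setLIntegral_congr_fun measurableSet_Ioi ?_
    intro x hx
    beta_reduce
    rw [Real.mul_rpow hc.le (le_of_lt hx), ENNReal.ofReal_mul (Real.rpow_nonneg hc.le _),
      mul_assoc]
  rw [hcongr] at h0
  rw [lintegral_const_mul' _ _ ENNReal.ofReal_ne_top] at h0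
  have key : ENNReal.ofReal (c ^ (1 - s)) * (ENNReal.ofReal (c ^ (s - 1)) *
      ∫⁻ x in Set.Ioi (0:ℝ), ENNReal.ofReal (x ^ (s - 1)) * N (c * x))
      = ∫⁻ x in Set.Ioi (0:ℝ), ENNReal.ofReal (x ^ (s - 1)) * N (c * x) := by
    rw [← mul_assoc, ← ENNReal.ofReal_mul (Real.rpow_nonneg hc.le _),
      ← Real.rpow_add hc]
    norm_num
  rw [← key, h0, ← mul_assoc, ← ENNReal.ofReal_mul (Real.rpow_nonneg hc.le _)]
  congr 2
  rw [← Real.rpow_neg_one c, ← Real.rpow_add hc]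
  ring_nf

/-- `(a+b)^p ≤ 2^p (a^p + b^p)` in `ℝ≥0∞` for `p ≥ 0`. -/
lemma add_rpow_le_two_rpow_mul (a b : ℝ≥0∞) {p : ℝ} (hp : 0 ≤ p) :
    (a + b) ^ p ≤ 2 ^ p * (a ^ p + b ^ p) := by
  calc (a + b) ^ p ≤ (2 * max a b) ^ p := by
        refine ENNReal.rpow_le_rpow ?_ hp
        rw [two_mul]
        exact add_le_add (le_max_left a b) (le_max_right a b)
    _ = 2 ^ p * (max a b) ^ p := ENNReal.mul_rpow_of_nonneg _ _ hp
    _ ≤ 2 ^ p * (a ^ p + b ^ p) := by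
        gcongr
        rcases le_total a b with h | h
        · rw [max_eq_right h]; exact le_add_self
        · rw [max_eq_left h]; exact le_self_add

/-- Derivation of the Lorentz estimate (Theorem 1.4) from the good-λ inequality of
Theorem 1.3. -/
theorem goodLambda_aInfty_to_lorentz (n : ℕ) (hn : 2 ≤ n)
    (Ω : Set (EuclideanSpace ℝ (Fin n))) (hΩ : MeasurableSet Ω)
    (F G : EuclideanSpace ℝ (Fin n) → ℝ) (hF0 : ∀ x, 0 ≤ F x) (hG0 : ∀ x, 0 ≤ G x)
    (hFmeas : Measurable F) (hGmeas : Measurable G)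
    (C₁ aInf : ℝ) (hC₁ : 0 < C₁) (haInf : 1 < aInf)
    (hgood : ∀ ε ∈ Set.Ioo (0 : ℝ) 1, ∃ aε ∈ Set.Ioo (0 : ℝ) 1, ∀ lam : ℝ, 0 < lam →
      volume {ζ ∈ Ω | aInf * lam < F ζ}
        ≤ ENNReal.ofReal (C₁ * ε) * volume {ζ ∈ Ω | lam < F ζ}
          + volume {ζ ∈ Ω | aε * lam < G ζ}) :
    ∀ q s : ℝ, 0 < q → 0 < s → lorentzNorm Ω q s F ≠ ⊤ →
      ∃ C₂ : ℝ, 0 < C₂ ∧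
        lorentzNorm Ω q s F ≤ ENNReal.ofReal C₂ * lorentzNorm Ω q s G := by
  intro q s hq hs hfin
  have hp0 : 0 < s / q := div_pos hs hq
  have haInf0 : (0:ℝ) < aInf := lt_trans one_pos haInf
  -- choice of ε
  set A : ℝ := aInf ^ s * 2 ^ (s/q) * C₁ ^ (s/q) with hA
  have hApos : 0 < A := by positivity
  set ε : ℝ := min (1/2) ((1/(2*A)) ^ (1/(s/q))) with hεdef
  have hε0 : 0 < ε := lt_min (by norm_num) (Real.rpow_pos_of_pos (by positivity) _)
  have hε1 : ε < 1 := lt_of_le_of_lt (min_le_left _ _) (by norm_num)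
  obtain ⟨aε, haε, hgl⟩ := hgood ε ⟨hε0, hε1⟩
  have haε0 : 0 < aε := haε.1
  have hkey : A * ε ^ (s/q) ≤ 1/2 := by
    have h1 : ε ≤ (1/(2*A)) ^ (1/(s/q)) := min_le_right _ _
    have h2 : ε ^ (s/q) ≤ ((1/(2*A)) ^ (1/(s/q))) ^ (s/q) :=
      Real.rpow_le_rpow hε0.le h1 hp0.le
    have h3 : ((1/(2*A)) ^ (1/(s/q))) ^ (s/q) = 1/(2*A) := by
      rw [← Real.rpow_mul (by positivity), one_div (s/q), inv_mul_cancel₀ hp0.ne',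
        Real.rpow_one]
    calc A * ε ^ (s/q) ≤ A * (1/(2*A)) := by
          rw [← h3]; exact mul_le_mul_of_nonneg_left h2 hApos.le
      _ = 1/2 := by field_simp
  -- distribution functions
  set Nf : ℝ → ℝ≥0∞ := fun τ => volume {ζ ∈ Ω | τ < F ζ} with hNf
  set Ng : ℝ → ℝ≥0∞ := fun τ => volume {ζ ∈ Ω | τ < G ζ} with hNg
  have hNfmeas : Measurable Nf :=
    Antitone.measurable fun τ τ' h =>
      measure_mono (fun ζ hζ => ⟨hζ.1, lt_of_le_of_lt h hζ.2⟩)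
  have hNgmeas : Measurable Ng :=
    Antitone.measurable fun τ τ' h =>
      measure_mono (fun ζ hζ => ⟨hζ.1, lt_of_le_of_lt h hζ.2⟩)
  set IF := ∫⁻ τ in Set.Ioi (0:ℝ), ENNReal.ofReal (τ ^ (s-1)) * Nf τ ^ (s/q) with hIF
  set IG := ∫⁻ τ in Set.Ioi (0:ℝ), ENNReal.ofReal (τ ^ (s-1)) * Ng τ ^ (s/q) with hIG
  have hsetF : ∀ τ : ℝ, {ζ ∈ Ω | τ < |F ζ|} = {ζ ∈ Ω | τ < F ζ} := fun τ => by
    ext ζ; simp [abs_of_nonneg (hF0 ζ)]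
  have hsetG : ∀ τ : ℝ, {ζ ∈ Ω | τ < |G ζ|} = {ζ ∈ Ω | τ < G ζ} := fun τ => by
    ext ζ; simp [abs_of_nonneg (hG0 ζ)]
  have hFnorm : lorentzNorm Ω q s F = (ENNReal.ofReal q * IF) ^ (1/s) := by
    simp only [lorentzNorm, hsetF, hIF, hNf]
  have hGnorm : lorentzNorm Ω q s G = (ENNReal.ofReal q * IG) ^ (1/s) := by
    simp only [lorentzNorm, hsetG, hIG, hNg]
  have hq0 : ENNReal.ofReal q ≠ 0 := (ENNReal.ofReal_pos.2 hq).ne'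
  have hIFfin : IF ≠ ⊤ := by
    intro h
    apply hfin
    rw [hFnorm, h, ENNReal.mul_top hq0, ENNReal.top_rpow_of_pos (by positivity)]
  -- pointwise good-λ after raising to power s/q
  have hpt : ∀ x ∈ Set.Ioi (0:ℝ),
      ENNReal.ofReal (x^(s-1)) * Nf (aInf * x) ^ (s/q)
        ≤ (2^(s/q) * ENNReal.ofReal (C₁*ε)^(s/q)) *
            (ENNReal.ofReal (x^(s-1)) * Nf x ^ (s/q))
          + 2^(s/q) * (ENNReal.ofReal (x^(s-1)) * Ng (aε * x) ^ (s/q)) := by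
    intro x hx
    have h1 : Nf (aInf * x) ≤ ENNReal.ofReal (C₁*ε) * Nf x + Ng (aε * x) := hgl x hx
    have h2 : Nf (aInf*x)^(s/q)
        ≤ 2^(s/q) * ((ENNReal.ofReal (C₁*ε) * Nf x)^(s/q) + Ng (aε*x)^(s/q)) :=
      le_trans (ENNReal.rpow_le_rpow h1 hp0.le) (add_rpow_le_two_rpow_mul _ _ hp0.le)
    rw [ENNReal.mul_rpow_of_nonneg _ _ hp0.le] at h2
    calc ENNReal.ofReal (x^(s-1)) * Nf (aInf*x)^(s/q)
        ≤ ENNReal.ofReal (x^(s-1)) *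
            (2^(s/q) * (ENNReal.ofReal (C₁*ε)^(s/q) * Nf x ^ (s/q) + Ng (aε*x)^(s/q))) :=
          mul_le_mul_right h2 _
      _ = (2^(s/q) * ENNReal.ofReal (C₁*ε)^(s/q)) *
            (ENNReal.ofReal (x^(s-1)) * Nf x ^ (s/q))
          + 2^(s/q) * (ENNReal.ofReal (x^(s-1)) * Ng (aε * x) ^ (s/q)) := by ring
  have hJF : ∫⁻ x in Set.Ioi (0:ℝ), ENNReal.ofReal (x^(s-1)) * Nf (aInf*x)^(s/q)
      = ENNReal.ofReal (aInf^(-s)) * IF := scale_weighted (fun τ => Nf τ ^ (s/q)) haInf0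
  have hJG : ∫⁻ x in Set.Ioi (0:ℝ), ENNReal.ofReal (x^(s-1)) * Ng (aε*x)^(s/q)
      = ENNReal.ofReal (aε^(-s)) * IG := scale_weighted (fun τ => Ng τ ^ (s/q)) haε0
  have htwo_ne : (2:ℝ≥0∞)^(s/q) ≠ ⊤ :=
    ENNReal.rpow_ne_top_of_nonneg hp0.le (by norm_num)
  have hmeas1 : Measurable fun x : ℝ =>
      (2^(s/q) * ENNReal.ofReal (C₁*ε)^(s/q)) *
        (ENNReal.ofReal (x^(s-1)) * Nf x ^ (s/q)) :=
    measurable_const.mul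
      ((ENNReal.measurable_ofReal.comp (measurable_id.pow measurable_const)).mul
        (hNfmeas.pow measurable_const))
  have hIFle : ENNReal.ofReal (aInf^(-s)) * IF
      ≤ (2^(s/q) * ENNReal.ofReal (C₁*ε)^(s/q)) * IF
        + 2^(s/q) * (ENNReal.ofReal (aε^(-s)) * IG) := by
    rw [← hJF, ← hJG]
    calc ∫⁻ x in Set.Ioi (0:ℝ), ENNReal.ofReal (x^(s-1)) * Nf (aInf*x)^(s/q)
        ≤ ∫⁻ x in Set.Ioi (0:ℝ),
            ((2^(s/q) * ENNReal.ofReal (C₁*ε)^(s/q)) *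
              (ENNReal.ofReal (x^(s-1)) * Nf x ^ (s/q))
            + 2^(s/q) * (ENNReal.ofReal (x^(s-1)) * Ng (aε * x) ^ (s/q))) :=
          setLIntegral_mono' measurableSet_Ioi hpt
      _ = (2^(s/q) * ENNReal.ofReal (C₁*ε)^(s/q)) * IF
          + 2^(s/q) * ∫⁻ x in Set.Ioi (0:ℝ),
              ENNReal.ofReal (x^(s-1)) * Ng (aε * x) ^ (s/q) := by
          rw [lintegral_add_left hmeas1,
            lintegral_const_mul' _ _
              (ENNReal.mul_ne_top htwo_ne
                (ENNReal.rpow_ne_top_of_nonneg hp0.le ENNReal.ofReal_ne_top)),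
            lintegral_const_mul' _ _ htwo_ne]
  -- absorb the IF term
  have hcoeff : ENNReal.ofReal (aInf^s) * (2^(s/q) * ENNReal.ofReal (C₁*ε)^(s/q))
      = ENNReal.ofReal (A * ε^(s/q)) := by
    have h2 : (2:ℝ≥0∞) = ENNReal.ofReal 2 := by norm_num
    rw [h2, ENNReal.ofReal_rpow_of_pos (by norm_num),
      ENNReal.ofReal_rpow_of_pos (by positivity),
      ← ENNReal.ofReal_mul (by positivity), ← ENNReal.ofReal_mul (by positivity)]
    congr 1
    rw [hA, Real.mul_rpow hC₁.le hε0.le]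
    ring
  set D : ℝ≥0∞ := ENNReal.ofReal (aInf^s * 2^(s/q) * aε^(-s)) with hD
  have hcoeff2 : ENNReal.ofReal (aInf^s) * (2^(s/q) * ENNReal.ofReal (aε^(-s))) = D := by
    have h2 : (2:ℝ≥0∞) = ENNReal.ofReal 2 := by norm_num
    rw [h2, ENNReal.ofReal_rpow_of_pos (by norm_num),
      ← ENNReal.ofReal_mul (by positivity), ← ENNReal.ofReal_mul (by positivity), hD]
    ring_nf
  have hIFle2 : IF ≤ ENNReal.ofReal (1/2) * IF + D * IG := by
    have hstart : IF = ENNReal.ofReal (aInf^s) * (ENNReal.ofReal (aInf^(-s)) * IF) := by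
      rw [← mul_assoc, ← ENNReal.ofReal_mul (by positivity), ← Real.rpow_add haInf0]
      norm_num
    calc IF = ENNReal.ofReal (aInf^s) * (ENNReal.ofReal (aInf^(-s)) * IF) := hstart
      _ ≤ ENNReal.ofReal (aInf^s) *
            ((2^(s/q) * ENNReal.ofReal (C₁*ε)^(s/q)) * IF
              + 2^(s/q) * (ENNReal.ofReal (aε^(-s)) * IG)) := mul_le_mul_right hIFle _
      _ = (ENNReal.ofReal (aInf^s) * (2^(s/q) * ENNReal.ofReal (C₁*ε)^(s/q))) * IF
          + (ENNReal.ofReal (aInf^s) * (2^(s/q) * ENNReal.ofReal (aε^(-s)))) * IG := by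
          ring
      _ = ENNReal.ofReal (A * ε^(s/q)) * IF + D * IG := by rw [hcoeff, hcoeff2]
      _ ≤ ENNReal.ofReal (1/2) * IF + D * IG := by
          have := ENNReal.ofReal_le_ofReal hkey
          gcongr
  have hhalf_ne : ENNReal.ofReal (1/2) * IF ≠ ⊤ :=
    ENNReal.mul_ne_top ENNReal.ofReal_ne_top hIFfin
  have hsplit : IF = ENNReal.ofReal (1/2) * IF + ENNReal.ofReal (1/2) * IF := by
    rw [← add_mul, ← ENNReal.ofReal_add (by norm_num) (by norm_num)]
    norm_num
  have h6 : ENNReal.ofReal (1/2) * IF ≤ D * IG :=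
    (ENNReal.add_le_add_iff_left hhalf_ne).1 (hsplit ▸ hIFle2)
  have h7 : IF ≤ ENNReal.ofReal 2 * (D * IG) := by
    calc IF = ENNReal.ofReal 2 * (ENNReal.ofReal (1/2) * IF) := by
          rw [← mul_assoc, ← ENNReal.ofReal_mul (by norm_num)]
          norm_num
      _ ≤ ENNReal.ofReal 2 * (D * IG) := mul_le_mul_right h6 _
  -- conclusion
  refine ⟨(2 * (aInf^s * 2^(s/q) * aε^(-s)))^(1/s), by positivity, ?_⟩
  rw [hFnorm, hGnorm]
  have h2D : ENNReal.ofReal 2 * D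
      = ENNReal.ofReal (2 * (aInf^s * 2^(s/q) * aε^(-s))) := by
    rw [hD, ← ENNReal.ofReal_mul (by norm_num)]
  calc (ENNReal.ofReal q * IF)^(1/s)
      ≤ (ENNReal.ofReal q * (ENNReal.ofReal 2 * (D * IG)))^(1/s) :=
        ENNReal.rpow_le_rpow (mul_le_mul_right h7 _) (by positivity)
    _ = ((ENNReal.ofReal 2 * D) * (ENNReal.ofReal q * IG))^(1/s) := by ring_nf
    _ = (ENNReal.ofReal 2 * D)^(1/s) * (ENNReal.ofReal q * IG)^(1/s) :=
        ENNReal.mul_rpow_of_nonneg _ _ (by positivity)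
    _ = ENNReal.ofReal ((2 * (aInf^s * 2^(s/q) * aε^(-s)))^(1/s)) *
          (ENNReal.ofReal q * IG)^(1/s) := by
        rw [h2D, ENNReal.ofReal_rpow_of_pos (by positivity)]
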